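/- If a weighted K_h-minor-free digraph G has bottleneck-ball set system B^β = {B^β(s,ρ) : s ∈ V, ρ ∈ ℝ}, where B^β(s,ρ) = {v : β_G(s,v) ≤ ρ} and β_G is the bottleneck distance, then VCdim(B^β) ≤ h − 1, assuming every family of ordinary distance balls in a K_h-minor-free digraph has VC dimension at most h − 1. -/

import Mathlib

/-- A simple path from `u` to `v` in the digraph with adjacency relation `A`. -/
def IsSPath {V : Type*} (A : V → V → Prop) (u v : V) (l : List V) : Prop :=
  l.Chain' A ∧ l.head? = some u ∧ l.getLast? = some v ∧ l.Nodup

/-- The (additive) weight of a path. -/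
def pathWeight {V : Type*} (w : V → V → ℝ) (l : List V) : ℝ :=
  ((l.zip l.tail).map fun p => w p.1 p.2).sum

/-- Shortest-path distance in a weighted digraph, valued in `EReal`. -/
noncomputable def ddist {V : Type*} (A : V → V → Prop) (w : V → V → ℝ) (u v : V) : EReal :=
  sInf {x : EReal | ∃ l, IsSPath A u v l ∧ x = (pathWeight w l : ℝ)}

/-- Bottleneck distance: the minimum over `u → v` paths of the maximum edge weight
on the path, valued in `EReal` (`⊤` when unreachable). -/
noncomputable def bdist {V : Type*} (A : V → V → Prop) (w : V → V → ℝ) (u v : V) : EReal :=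
  sInf {x : EReal | ∃ l, IsSPath A u v l ∧
    x = ((l.zip l.tail).map fun p => (w p.1 p.2 : EReal)).foldr max ⊥}

/-- `G` contains `K_d` as a minor. -/
def HasCompleteMinor {V : Type*} (G : SimpleGraph V) (d : ℕ) : Prop :=
  ∃ B : Fin d → Set V,
    (∀ i, (B i).Nonempty) ∧
    (∀ i, (G.induce (B i)).Connected) ∧
    (∀ i j, i ≠ j → Disjoint (B i) (B j)) ∧
    (∀ i j, i ≠ j → ∃ a ∈ B i, ∃ b ∈ B j, G.Adj a b)

/-- A set system `F` (VC-)shatters `A` if every subset of `A` is `A ∩ S`, `S ∈ F`. -/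
def VCShatters {α : Type*} (F : Set (Set α)) (A : Set α) : Prop :=
  ∀ B ⊆ A, ∃ S ∈ F, A ∩ S = B

/-- VC dimension of a set system. -/
noncomputable def VCdim {α : Type*} (F : Set (Set α)) : ℕ :=
  sSup {d | ∃ A : Finset α, A.card = d ∧ VCShatters F ↑A}

-- auxiliary lemmas

lemma foldr_max_le_iff (L : List EReal) (a : EReal) :
    L.foldr max ⊥ ≤ a ↔ ∀ x ∈ L, x ≤ a := by
  induction L with
  | nil => simp
  | cons b L ih => simp [max_le_iff, ih]

lemma finite_nodup {V : Type*} [Fintype V] : {l : List V | l.Nodup}.Finite := by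
  apply Set.Finite.subset (List.finite_length_le V (Fintype.card V))
  intro l hl
  exact hl.length_le_card

lemma bdist_le_iff {V : Type*} [Fintype V] (A : V → V → Prop) (w : V → V → ℝ)
    (s v : V) (ρ : ℝ) :
    bdist A w s v ≤ (ρ : EReal) ↔
      ∃ l, IsSPath A s v l ∧ ∀ p ∈ l.zip l.tail, w p.1 p.2 ≤ ρ := by
  set S := {x : EReal | ∃ l, IsSPath A s v l ∧
    x = ((l.zip l.tail).map fun p => (w p.1 p.2 : EReal)).foldr max ⊥} with hS
  have hfin : S.Finite := by
    have : S ⊆ (fun l : List V =>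
        ((l.zip l.tail).map fun p => (w p.1 p.2 : EReal)).foldr max ⊥) '' {l | l.Nodup} := by
      rintro x ⟨l, hl, rfl⟩
      exact ⟨l, hl.2.2.2, rfl⟩
    exact Set.Finite.subset ((finite_nodup).image _) this
  constructor
  · intro hle
    rcases S.eq_empty_or_nonempty with hE | hne
    · exfalso
      rw [bdist, ← hS, hE] at hle
      simp at hle
    · have hmem := hne.csInf_mem hfin
      rcases hmem with ⟨l, hl, heq⟩
      refine ⟨l, hl, ?_⟩
      have : ((l.zip l.tail).map fun p => (w p.1 p.2 : EReal)).foldr max ⊥ ≤ (ρ : EReal) := by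
        rw [← heq]; rw [bdist, ← hS] at hle; exact hle
      rw [foldr_max_le_iff] at this
      intro p hp
      have := this _ (List.mem_map_of_mem hp)
      exact_mod_cast this
  · rintro ⟨l, hl, hρ⟩
    have hx : ((l.zip l.tail).map fun p => (w p.1 p.2 : EReal)).foldr max ⊥ ∈ S :=
      ⟨l, hl, rfl⟩
    refine le_trans (sInf_le hx) ?_
    rw [foldr_max_le_iff]
    intro x hx
    rcases List.mem_map.1 hx with ⟨p, hp, rfl⟩
    exact_mod_cast hρ p hp

lemma ddist_le_iff {V : Type*} [Fintype V] (A : V → V → Prop) (w : V → V → ℝ)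
    (s v : V) (r : ℝ) :
    ddist A w s v ≤ (r : EReal) ↔
      ∃ l, IsSPath A s v l ∧ pathWeight w l ≤ r := by
  set S := {x : EReal | ∃ l, IsSPath A s v l ∧ x = (pathWeight w l : ℝ)} with hS
  have hfin : S.Finite := by
    have : S ⊆ (fun l : List V => ((pathWeight w l : ℝ) : EReal)) '' {l | l.Nodup} := by
      rintro x ⟨l, hl, rfl⟩
      exact ⟨l, hl.2.2.2, rfl⟩
    exact Set.Finite.subset ((finite_nodup).image _) this
  constructor
  · intro hle
    rcases S.eq_empty_or_nonempty with hE | hne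
    · exfalso
      rw [ddist, ← hS, hE] at hle
      simp at hle
    · have hmem := hne.csInf_mem hfin
      rcases hmem with ⟨l, hl, heq⟩
      refine ⟨l, hl, ?_⟩
      rw [ddist, ← hS, heq] at hle
      exact_mod_cast hle
  · rintro ⟨l, hl, hr⟩
    refine le_trans (sInf_le ⟨l, hl, rfl⟩) ?_
    exact_mod_cast hr

theorem test : True := trivial
open Classical in
noncomputable def rk {V : Type*} [Fintype V] (w : V → V → ℝ) (x : ℝ) : ℕ :=
  (Finset.univ.filter (fun p : V × V => w p.1 p.2 ≤ x)).card

noncomputable def wprime {V : Type*} [Fintype V] (w : V → V → ℝ) (u v : V) : ℝ :=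
  ((Fintype.card V : ℝ) + 1) ^ (rk w (w u v))

open Classical in
lemma rk_mono {V : Type*} [Fintype V] (w : V → V → ℝ) {x y : ℝ} (hxy : x ≤ y) :
    rk w x ≤ rk w y := by
  apply Finset.card_le_card
  intro p hp
  simp only [Finset.mem_filter, Finset.mem_univ, true_and] at hp ⊢
  exact le_trans hp hxy

open Classical in
lemma rk_lt {V : Type*} [Fintype V] (w : V → V → ℝ) {x : ℝ} {p : V × V}
    (hx : x < w p.1 p.2) : rk w x < rk w (w p.1 p.2) := by
  apply Finset.card_lt_card
  constructor
  · intro q hq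
    simp only [Finset.mem_filter, Finset.mem_univ, true_and] at hq ⊢
    exact le_trans hq hx.le
  · intro hsub
    have := hsub (by simp : p ∈ Finset.univ.filter (fun q : V × V => w q.1 q.2 ≤ w p.1 p.2))
    simp only [Finset.mem_filter, Finset.mem_univ, true_and] at this
    exact absurd this (not_le.2 hx)

lemma main_iff {V : Type*} [Fintype V] (A : V → V → Prop) (w : V → V → ℝ)
    (s v : V) (ρ : ℝ) :
    bdist A w s v ≤ (ρ : EReal) ↔
      ddist A (wprime w) s v ≤
        (((Fintype.card V : ℝ) * ((Fintype.card V : ℝ) + 1) ^ (rk w ρ) : ℝ) : EReal) := by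
  set M : ℝ := (Fintype.card V : ℝ) with hM
  have hM0 : (0 : ℝ) ≤ M := by rw [hM]; exact_mod_cast Nat.zero_le _
  have hN1 : (1 : ℝ) ≤ M + 1 := by linarith
  have hNk : (0 : ℝ) < (M + 1) ^ (rk w ρ) := by positivity
  rw [bdist_le_iff, ddist_le_iff]
  apply exists_congr; intro l
  apply and_congr_right; intro hl
  constructor
  · intro hall
    have hlen : (l.zip l.tail).length ≤ Fintype.card V := by
      calc (l.zip l.tail).length ≤ l.length := by
            simp [List.length_zip]
        _ ≤ Fintype.card V := hl.2.2.2.length_le_card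
    have hbd : ∀ x ∈ (l.zip l.tail).map (fun p => wprime w p.1 p.2),
        x ≤ (M + 1) ^ (rk w ρ) := by
      intro x hx
      rcases List.mem_map.1 hx with ⟨p, hp, rfl⟩
      unfold wprime
      exact pow_le_pow_right₀ hN1 (rk_mono w (hall p hp))
    calc pathWeight (wprime w) l
        ≤ ((l.zip l.tail).map (fun p => wprime w p.1 p.2)).length • (M + 1) ^ (rk w ρ) :=
          List.sum_le_card_nsmul _ _ hbd
      _ = ((l.zip l.tail).length : ℝ) * (M + 1) ^ (rk w ρ) := by
          rw [List.length_map, nsmul_eq_mul]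
      _ ≤ M * (M + 1) ^ (rk w ρ) := by
          apply mul_le_mul_of_nonneg_right _ hNk.le
          rw [hM]; exact_mod_cast hlen
  · intro hsum
    by_contra hcon
    push_neg at hcon
    rcases hcon with ⟨p, hp, hρp⟩
    have h1 : wprime w p.1 p.2 ≤ pathWeight (wprime w) l := by
      apply List.single_le_sum
      · intro x hx
        rcases List.mem_map.1 hx with ⟨q, _, rfl⟩
        unfold wprime; positivity
      · exact List.mem_map_of_mem hp
    have h2 : (M + 1) ^ (rk w ρ + 1) ≤ wprime w p.1 p.2 := by
      unfold wprime
      exact pow_le_pow_right₀ hN1 (rk_lt w hρp)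
    have h3 : M * (M + 1) ^ (rk w ρ) < (M + 1) ^ (rk w ρ + 1) := by
      rw [pow_succ, mul_comm ((M+1)^(rk w ρ))]
      apply mul_lt_mul_of_pos_right _ hNk
      linarith
    linarith [hsum, h1, h2, h3]

lemma vcdim_mono {α : Type*} [Fintype α] {F1 F2 : Set (Set α)} (hsub : F1 ⊆ F2) :
    VCdim F1 ≤ VCdim F2 := by
  unfold VCdim
  set S1 := {d | ∃ A : Finset α, A.card = d ∧ VCShatters F1 ↑A} with hS1
  set S2 := {d | ∃ A : Finset α, A.card = d ∧ VCShatters F2 ↑A} with hS2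
  have hsub2 : S1 ⊆ S2 := by
    rintro d ⟨A, hA, hsh⟩
    refine ⟨A, hA, fun B hB => ?_⟩
    rcases hsh B hB with ⟨S, hS, hBS⟩
    exact ⟨S, hsub hS, hBS⟩
  have hbdd : BddAbove S2 := by
    refine ⟨Fintype.card α, ?_⟩
    rintro d ⟨A, hA, -⟩
    rw [← hA]
    exact Finset.card_le_univ A
  rcases S1.eq_empty_or_nonempty with hE | hne
  · rw [hE, csSup_empty]
    exact Nat.zero_le _
  · exact csSup_le_csSup hbdd hne hsub2


/-- If a weighted `K_h`-minor-free digraph `G` has bottleneck-ball set system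
`B^β = {B^β(s,ρ) : s ∈ V, ρ ∈ ℝ}` with `B^β(s,ρ) = {v : β_G(s,v) ≤ ρ}`, then
`VCdim(B^β) ≤ h − 1`, assuming (as a hypothesis) that for every choice of real edge
weights on the same `K_h`-minor-free digraph, the family of ordinary distance balls
has VC dimension at most `h − 1`. -/
theorem stmt_11 {V : Type*} [Fintype V] (A : V → V → Prop) (w : V → V → ℝ) (h : ℕ)
    (hminor : ¬ HasCompleteMinor (SimpleGraph.fromRel A) h)
    (hballs : ∀ w' : V → V → ℝ,
      VCdim {S : Set V | ∃ (s : V) (r : ℝ), S = {v | ddist A w' s v ≤ (r : EReal)}}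
        ≤ h - 1) :
    VCdim {S : Set V | ∃ (s : V) (ρ : ℝ), S = {v | bdist A w s v ≤ (ρ : EReal)}}
      ≤ h - 1 := by

  refine le_trans (vcdim_mono ?_) (hballs (wprime w))
  rintro S ⟨s, ρ, rfl⟩
  refine ⟨s, (Fintype.card V : ℝ) * ((Fintype.card V : ℝ) + 1) ^ (rk w ρ), ?_⟩
  ext v
  exact main_iff A w s v ρ
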